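/- Let M(odd) be the set of all elements of Z/2[r] of the form (r^2 + r)·g(r^2) with g ∈ Z/2[t]. Then U maps M(odd) into M(odd). -/
import Mathlib

open Polynomial

private lemma htwo : (2 : Polynomial (ZMod 2)) = 0 := by
  simpa using CharP.cast_eq_zero (Polynomial (ZMod 2)) 2

section
variable (U : Polynomial (ZMod 2) →ₗ[ZMod 2] Polynomial (ZMod 2))

private lemma hrec (hsemi : ∀ f, U (X ^ 3 * (X + 1) * f) = X * (X + 1) ^ 3 * U f) (m : ℕ) :
    U (X ^ (m + 4)) = X * (X + 1) ^ 3 * U (X ^ m) + U (X ^ (m + 3)) := by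
  have h : (X : Polynomial (ZMod 2)) ^ (m + 4) = X ^ 3 * (X + 1) * X ^ m + X ^ (m + 3) := by
    linear_combination (-(X ^ (m+3)) : Polynomial (ZMod 2)) * htwo
  rw [h, map_add, hsemi]

private lemma key (hsemi : ∀ f, U (X ^ 3 * (X + 1) * f) = X * (X + 1) ^ 3 * U f) (h0 : U 1 = 1) (h1 : U X = X) (h2 : U (X ^ 2) = X ^ 2)
    (h3 : U (X ^ 3) = X ^ 3 + X ^ 2 + X) : ∀ n : ℕ,
    (∃ a : Polynomial (ZMod 2), U (X ^ (2 * n)) = a.comp (X ^ 2)) ∧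
    (∃ a c : Polynomial (ZMod 2), U (X ^ (2 * n)) = a.comp (X ^ 2) ∧
      U (X ^ (2 * n + 3)) = (X ^ 3 + X) * a.comp (X ^ 2) + c.comp (X ^ 2)) := by
  intro n
  induction n using Nat.strong_induction_on with
  | _ n ih =>
    match n with
    | 0 =>
      constructor
      · exact ⟨1, by simpa using h0⟩
      · refine ⟨1, X, by simpa using h0, ?_⟩
        simp only [pow_zero, one_comp, X_comp]
        rw [show 2*0+3 = 3 from rfl, h3]; ring
    | 1 =>
      have hU4 : U (X ^ 4) = X ^ 4 := by
        have := hrec U hsemi 0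
        rw [show (0:ℕ)+4 = 4 from rfl, show (0:ℕ)+3 = 3 from rfl] at this
        rw [this, pow_zero, h0, h3]
        linear_combination ((2*X^3+2*X^2+X : Polynomial (ZMod 2))) * htwo
      have hU5 : U (X ^ 5) = X ^ 5 + X ^ 3 + X ^ 2 := by
        have := hrec U hsemi 1
        rw [show (1:ℕ)+4 = 5 from rfl, show (1:ℕ)+3 = 4 from rfl] at this
        rw [this, pow_one, h1, hU4]
        linear_combination ((2*X^4+X^3 : Polynomial (ZMod 2))) * htwo
      constructor
      · exact ⟨X, by simpa using h2⟩
      · refine ⟨X, X, by simpa using h2, ?_⟩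
        simp only [X_comp]
        rw [show 2*1+3 = 5 from rfl, hU5]; ring
    | (n+2) =>
      obtain ⟨⟨_, ⟨a₀, c₀, ha₀, hodd₀⟩⟩, ⟨_, ⟨a₁, c₁, ha₁, hodd₁⟩⟩⟩ :=
        And.intro (ih n (by omega)) (ih (n+1) (by omega))
      rw [show 2*(n+1) = 2*n+2 from by ring] at ha₁
      rw [show 2*(n+1)+3 = 2*n+5 from by ring] at hodd₁
      have heven : U (X ^ (2 * (n+2))) = ((X^2+X) * a₀ + c₀).comp (X ^ 2) := by
        have := hrec U hsemi (2*n)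
        rw [show 2*n+4 = 2*(n+2) from by ring] at this
        rw [this, ha₀, hodd₀]
        simp only [add_comp, mul_comp, X_comp, pow_comp]
        linear_combination ((2*X^3+X^2+X : Polynomial (ZMod 2)) * a₀.comp (X^2)) * htwo
      refine ⟨⟨_, heven⟩, ⟨_, (X^3+X) * a₀ + (X^2+X) * c₀ + ((X^2+X) * a₁ + c₁), heven, ?_⟩⟩
      have hB : U (X ^ (2*n + 6)) = ((X^2+X) * a₁ + c₁).comp (X ^ 2) := by
        have := hrec U hsemi (2*n+2)
        rw [show 2*n+2+4 = 2*n+6 from by ring, show 2*n+2+3 = 2*n+5 from by ring] at this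
        rw [this, ha₁, hodd₁]
        simp only [add_comp, mul_comp, X_comp, pow_comp]
        linear_combination ((2*X^3+X^2+X : Polynomial (ZMod 2)) * a₁.comp (X^2)) * htwo
      have := hrec U hsemi (2*n+3)
      rw [show 2*n+3+4 = 2*(n+2)+3 from by ring, show 2*n+3+3 = 2*n+6 from by ring] at this
      rw [this, hodd₀, hB]
      simp only [add_comp, mul_comp, X_comp, pow_comp]
      linear_combination ((X^6+X^5+2*X^4+X^3 : Polynomial (ZMod 2)) * a₀.comp (X^2)
        + (X^3+X^2 : Polynomial (ZMod 2)) * c₀.comp (X^2)) * htwo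

end

theorem stmt17 (U : Polynomial (ZMod 2) →ₗ[ZMod 2] Polynomial (ZMod 2))
    (hsemi : ∀ f, U (X ^ 3 * (X + 1) * f) = X * (X + 1) ^ 3 * U f)
    (h0 : U 1 = 1) (h1 : U X = X) (h2 : U (X ^ 2) = X ^ 2)
    (h3 : U (X ^ 3) = X ^ 3 + X ^ 2 + X) :
    ∀ g : Polynomial (ZMod 2), ∃ g' : Polynomial (ZMod 2),
      U ((X ^ 2 + X) * g.comp (X ^ 2)) = (X ^ 2 + X) * g'.comp (X ^ 2) := by
  have mono : ∀ k : ℕ, ∃ b : Polynomial (ZMod 2),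
      U ((X ^ 2 + X) * (X ^ 2) ^ k) = (X ^ 2 + X) * b.comp (X ^ 2) := by
    intro k
    cases k with
    | zero =>
      exact ⟨1, by rw [pow_zero, mul_one, map_add, h1, h2, one_comp, mul_one]⟩
    | succ k =>
      obtain ⟨a, ha⟩ := (key U hsemi h0 h1 h2 h3 k).1
      refine ⟨(X + 1) * a, ?_⟩
      have hid : ((X ^ 2 + X : Polynomial (ZMod 2))) * (X ^ 2) ^ (k + 1)
          = X ^ 3 * (X + 1) * X ^ (2 * k) := by ring
      rw [hid, hsemi, ha]
      simp only [mul_comp, add_comp, X_comp, one_comp]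
      linear_combination ((X ^ 3 + X ^ 2 : Polynomial (ZMod 2)) * a.comp (X ^ 2)) * htwo
  intro g
  induction g using Polynomial.induction_on' with
  | add p q hp hq =>
    obtain ⟨p', hp'⟩ := hp
    obtain ⟨q', hq'⟩ := hq
    exact ⟨p' + q', by rw [add_comp, mul_add, map_add, hp', hq', add_comp, mul_add]⟩
  | monomial n a =>
    obtain ⟨b, hb⟩ := mono n
    refine ⟨a • b, ?_⟩
    rw [← smul_X_eq_monomial, smul_comp]
    simp only [pow_comp, X_comp]
    rw [mul_smul_comm, map_smul, hb, smul_comp, mul_smul_comm]
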